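/- Let n ≥ 2. In the root system of type B_n, the minimum, over unordered pairs {α_i, α_j} of distinct simple roots in Π, of the resonant codimension of Π ∖ {α_i, α_j} equals 4n − 4. -/

import Mathlib

namespace Stmt5Aux

variable {n : ℕ}

noncomputable def E (n : ℕ) (i : Fin n) : Fin n → ℝ := Pi.single i 1

noncomputable def A (n : ℕ) (k : Fin n) : Fin n → ℝ :=
  if h : (k : ℕ) + 1 < n then E n k - E n ⟨(k : ℕ) + 1, h⟩ else E n k

def Sp (n : ℕ) : Set (Fin n → ℝ) :=
  {v | (∃ i j : Fin n, i < j ∧ (v = E n i - E n j ∨ v = E n i + E n j)) ∨ ∃ i : Fin n, v = E n i}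

noncomputable def F (k : Fin n) (v : Fin n → ℝ) : ℝ := ∑ m ∈ Finset.Iic k, v m

lemma E_apply (a m : Fin n) : E n a m = if m = a then 1 else 0 := by
  simp [E, Pi.single_apply]

lemma F_E (k a : Fin n) : F k (E n a) = if a ≤ k then 1 else 0 := by
  simp only [F, E_apply]
  rw [Finset.sum_ite_eq' (Finset.Iic k) a (fun _ => (1:ℝ))]
  simp

lemma F_sub (k : Fin n) (u v : Fin n → ℝ) : F k (u - v) = F k u - F k v := by
  simp [F, Finset.sum_sub_distrib]

lemma F_add (k : Fin n) (u v : Fin n → ℝ) : F k (u + v) = F k u + F k v := by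
  simp [F, Finset.sum_add_distrib]

lemma F_A (k l : Fin n) : F k (A n l) = if l = k then 1 else 0 := by
  unfold A
  by_cases h : (l:ℕ) + 1 < n
  · rw [dif_pos h, F_sub, F_E, F_E]
    have h1 : ((⟨(l:ℕ)+1, h⟩ : Fin n) ≤ k) ↔ (l:ℕ) < (k:ℕ) := by
      rw [Fin.le_def]; simp
    have h2 : (l ≤ k) ↔ (l:ℕ) ≤ (k:ℕ) := Fin.le_def
    have h3 : (l = k) ↔ (l:ℕ) = (k:ℕ) := Fin.val_eq_val l k |>.symm
    split_ifs with c1 c2 c3 c4 c5 <;>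
      simp_all <;> omega
  · rw [dif_neg h, F_E]
    have hl : (l:ℕ) = n - 1 := by have := l.isLt; omega
    have h2 : (l ≤ k) ↔ (l:ℕ) ≤ (k:ℕ) := Fin.le_def
    have h3 : (l = k) ↔ (l:ℕ) = (k:ℕ) := Fin.val_eq_val l k |>.symm
    have hk := k.isLt
    split_ifs with c1 c2 c3 <;> simp_all <;> omega


lemma linearIndependent_A : LinearIndependent ℝ (A n) := by
  rw [Fintype.linearIndependent_iff]
  intro g hg i
  have h0 : F i (∑ k, g k • A n k) = 0 := by rw [hg]; simp [F]
  have : F i (∑ k, g k • A n k) = ∑ k, g k * F i (A n k) := by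
    simp only [F, Finset.sum_apply, Pi.smul_apply, smul_eq_mul, Finset.mul_sum]
    rw [Finset.sum_comm]
  rw [this] at h0
  simpa [F_A] using h0

lemma e_mem_span (m : Fin n) : E n m ∈ Submodule.span ℝ (Set.range (A n)) := by
  have key : ∀ d : ℕ, ∀ m : Fin n, n - 1 - (m:ℕ) ≤ d →
      E n m ∈ Submodule.span ℝ (Set.range (A n)) := by
    intro d
    induction d with
    | zero =>
      intro m hm
      have hml : ¬ ((m:ℕ) + 1 < n) := by have := m.isLt; omega
      have : A n m = E n m := by unfold A; rw [dif_neg hml]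
      rw [← this]
      exact Submodule.subset_span ⟨m, rfl⟩
    | succ d ih =>
      intro m hm
      by_cases hml : (m:ℕ) + 1 < n
      · have h1 : E n m = A n m + E n ⟨(m:ℕ)+1, hml⟩ := by
          unfold A; rw [dif_pos hml]; ring
        rw [h1]
        exact Submodule.add_mem _ (Submodule.subset_span ⟨m, rfl⟩)
          (ih ⟨(m:ℕ)+1, hml⟩ (by simp; omega))
      · have : A n m = E n m := by unfold A; rw [dif_neg hml]
        rw [← this]
        exact Submodule.subset_span ⟨m, rfl⟩
  exact key (n - 1 - (m:ℕ)) m le_rfl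

lemma span_A_top : ⊤ ≤ Submodule.span ℝ (Set.range (A n)) := by
  intro v _
  have hv : v = ∑ m, v m • E n m := by
    funext x
    simp only [Finset.sum_apply, Pi.smul_apply, E_apply, smul_eq_mul]
    rw [Finset.sum_congr rfl (fun m _ => by rw [mul_ite, mul_one, mul_zero])]
    simp
  rw [hv]
  exact Submodule.sum_mem _ (fun m _ => Submodule.smul_mem _ _ (e_mem_span m))

noncomputable def B (n : ℕ) : Module.Basis (Fin n) ℝ (Fin n → ℝ) :=
  Module.Basis.mk linearIndependent_A span_A_top

lemma B_eq : ⇑(B n) = A n := Module.Basis.coe_mk _ _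

lemma repr_eq_F (v : Fin n → ℝ) (k : Fin n) : (B n).repr v k = F k v := by
  conv_rhs => rw [← (B n).sum_repr v]
  have : F k (∑ l, (B n).repr v l • (B n) l) = ∑ l, (B n).repr v l * F k (B n l) := by
    simp only [F, Finset.sum_apply, Pi.smul_apply, smul_eq_mul, Finset.mul_sum]
    rw [Finset.sum_comm]
  rw [this]
  simp [B_eq, F_A]

lemma mem_span_iff {i j : Fin n} (hij : i ≠ j) (v : Fin n → ℝ) :
    v ∈ Submodule.span ℝ (Set.range (A n) \ {A n i, A n j}) ↔ F i v = 0 ∧ F j v = 0 := by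
  have hinj : Function.Injective (A n) := by
    have := linearIndependent_A (n := n)
    exact this.injective
  have himg : Set.range (A n) \ {A n i, A n j} = A n '' ({i, j}ᶜ) := by
    have : ({i, j}ᶜ : Set (Fin n)) = Set.univ \ {i, j} := by
      simp [Set.compl_eq_univ_diff]
    rw [this, Set.image_diff hinj, Set.image_univ, Set.image_pair]
  rw [himg, ← B_eq, Module.Basis.mem_span_image]
  constructor
  · intro hsub
    constructor
    · rw [← repr_eq_F]
      by_contra h0
      have : i ∈ ((B n).repr v).support := Finsupp.mem_support_iff.2 h0
      have := hsub this
      simp at this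
    · rw [← repr_eq_F]
      by_contra h0
      have : j ∈ ((B n).repr v).support := Finsupp.mem_support_iff.2 h0
      have := hsub this
      simp at this
  · rintro ⟨h1, h2⟩ k hk
    rw [Finset.mem_coe, Finsupp.mem_support_iff, repr_eq_F] at hk
    simp only [Set.mem_compl_iff, Set.mem_insert_iff, Set.mem_singleton_iff]
    rintro (rfl | rfl) <;> exact hk (by assumption)


noncomputable def RR (n : ℕ) (p : Fin n × Fin n) : Fin n → ℝ :=
  if p.1 < p.2 then E n p.1 - E n p.2 else if p.2 < p.1 then E n p.2 + E n p.1 else E n p.1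

lemma Sp_eq_range : Sp n = Set.range (RR n) := by
  ext v
  constructor
  · rintro (⟨i, j, hij, (rfl | rfl)⟩ | ⟨i, rfl⟩)
    · exact ⟨(i, j), by simp [RR, hij]⟩
    · exact ⟨(j, i), by simp [RR, not_lt_of_gt hij, hij]⟩
    · exact ⟨(i, i), by simp [RR]⟩
  · rintro ⟨⟨a, b⟩, rfl⟩
    rcases lt_trichotomy a b with h | h | h
    · exact Or.inl ⟨a, b, h, Or.inl (by simp [RR, h])⟩
    · subst h; exact Or.inr ⟨a, by simp [RR]⟩
    · exact Or.inl ⟨b, a, h, Or.inr (by simp [RR, not_lt_of_gt h, h])⟩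

lemma RR_at_fst (a b : Fin n) : RR n (a, b) a = 1 := by
  unfold RR
  rcases lt_trichotomy a b with h | h | h
  · simp [h, E_apply, ne_of_lt h]
  · simp [h, E_apply]
  · simp [not_lt_of_gt h, h, E_apply, ne_of_gt h]

lemma RR_at_snd (a b : Fin n) : RR n (a, b) b = if a < b then -1 else 1 := by
  unfold RR
  rcases lt_trichotomy a b with h | h | h
  · simp [h, E_apply, (ne_of_lt h).symm]
  · subst h; simp [E_apply]
  · simp [not_lt_of_gt h, h, E_apply, (ne_of_gt h).symm]

lemma RR_supp (a b x : Fin n) : RR n (a, b) x ≠ 0 ↔ (x = a ∨ x = b) := by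
  unfold RR
  rcases lt_trichotomy a b with h | h | h
  · have hne : a ≠ b := ne_of_lt h
    rw [if_pos h]
    simp only [Pi.sub_apply, E_apply]
    rcases eq_or_ne x a with rfl | hxa
    · simp [hne]
    · rcases eq_or_ne x b with rfl | hxb
      · simp [hxa]
      · simp [hxa, hxb]
  · subst h
    rw [if_neg (lt_irrefl a), if_neg (lt_irrefl a)]
    simp only [E_apply]
    rcases eq_or_ne x a with rfl | hxa
    · simp
    · simp [hxa]
  · rw [if_neg (not_lt_of_gt h), if_pos h]
    simp only [Pi.add_apply, E_apply]
    rcases eq_or_ne x a with rfl | hxa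
    · rcases eq_or_ne x b with h' | h' <;> simp [h']
    · rcases eq_or_ne x b with rfl | hxb
      · simp [hxa]
      · simp [hxa, hxb]

lemma RR_inj : Function.Injective (RR n) := by
  intro ⟨a, b⟩ ⟨c, d⟩ hpq
  have key : ∀ x : Fin n, (x = a ∨ x = b) ↔ (x = c ∨ x = d) := by
    intro x
    rw [← RR_supp a b x, ← RR_supp c d x, hpq]
  by_cases hac : a = c
  · subst hac
    rcases (key b).mp (Or.inr rfl) with hb | hb
    · subst hb
      rcases (key d).mpr (Or.inr rfl) with hd | hd <;> simp [hd.symm]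
    · simp [hb]
  · have had : a = d := ((key a).mp (Or.inl rfl)).resolve_left hac
    have hcb : c = b := ((key c).mpr (Or.inl rfl)).resolve_left (fun h => hac h.symm)
    exfalso
    subst had
    subst hcb
    have s1 : RR n (a, c) c = RR n (c, a) c := by rw [hpq]
    have s2 : RR n (a, c) a = RR n (c, a) a := by rw [hpq]
    rw [RR_at_snd, RR_at_fst] at s1
    rw [RR_at_fst, RR_at_snd] at s2
    have hba : ¬ a < c := fun h => by rw [if_pos h] at s1; norm_num at s1
    have hab2 : ¬ c < a := fun h => by rw [if_pos h] at s2; norm_num at s2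
    exact hac (le_antisymm (not_lt.mp hab2) (not_lt.mp hba))


def Out (n : ℕ) (i j : Fin n) : Set (Fin n → ℝ) :=
  {v | v ∈ Sp n ∧ v ∉ Submodule.span ℝ (Set.range (A n) \ {A n i, A n j})}

lemma Out_comm (i j : Fin n) : Out n i j = Out n j i := by
  unfold Out; rw [Set.pair_comm]

lemma Out_eq {i j : Fin n} (hij : i ≠ j) :
    Out n i j = RR n '' {p | ¬(F i (RR n p) = 0 ∧ F j (RR n p) = 0)} := by
  ext v
  simp only [Out, Set.mem_setOf_eq, Sp_eq_range, Set.mem_image, Set.mem_range]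
  constructor
  · rintro ⟨⟨p, rfl⟩, hs⟩
    exact ⟨p, by rwa [mem_span_iff hij] at hs, rfl⟩
  · rintro ⟨p, hc, rfl⟩
    exact ⟨⟨p, rfl⟩, by rwa [mem_span_iff hij]⟩

open scoped Classical in
lemma Out_ncard {i j : Fin n} (hij : i ≠ j) :
    (Out n i j).ncard =
      (Finset.univ.filter (fun p => ¬(F i (RR n p) = 0 ∧ F j (RR n p) = 0))).card := by
  rw [Out_eq hij, Set.ncard_image_of_injective _ RR_inj, ← Set.ncard_coe_finset]
  congr 1
  ext p
  simp

lemma Out_finite (i j : Fin n) : (Out n i j).Finite := by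
  apply Set.Finite.subset (Set.finite_range (RR n))
  intro v hv
  rw [← Sp_eq_range]
  exact hv.1

lemma F_diff_zero_iff {a b : Fin n} (hab : a < b) (k : Fin n) :
    F k (E n a - E n b) = 0 ↔ ¬ (a ≤ k ∧ k < b) := by
  rw [F_sub, F_E, F_E]
  by_cases c1 : a ≤ k <;> by_cases c2 : b ≤ k
  · simp [c1, c2, not_lt.2 c2]
  · simp only [if_pos c1, if_neg c2]
    norm_num [c1, not_le.mp c2]
  · exact absurd (le_of_lt (lt_of_lt_of_le hab c2)) c1
  · simp [c1, c2]

lemma C_diff {a b : Fin n} (hab : a < b) (i j : Fin n) :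
    (¬(F i (RR n (a, b)) = 0 ∧ F j (RR n (a, b)) = 0)) ↔
      ((a ≤ i ∧ i < b) ∨ (a ≤ j ∧ j < b)) := by
  have hr : RR n (a, b) = E n a - E n b := by simp [RR, hab]
  rw [hr, F_diff_zero_iff hab, F_diff_zero_iff hab]
  tauto

lemma F_single_zero_iff (a k : Fin n) : F k (E n a) = 0 ↔ ¬ a ≤ k := by
  rw [F_E]
  by_cases c : a ≤ k
  · simp [c]
  · simp [c]

lemma C_single (a i j : Fin n) :
    (¬(F i (RR n (a, a)) = 0 ∧ F j (RR n (a, a)) = 0)) ↔ (a ≤ i ∨ a ≤ j) := by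
  have hr : RR n (a, a) = E n a := by simp [RR]
  rw [hr, F_single_zero_iff, F_single_zero_iff]
  tauto

lemma F_sum_zero_iff {a b : Fin n} (hba : b < a) (k : Fin n) :
    F k (E n b + E n a) = 0 ↔ ¬ b ≤ k := by
  rw [F_add, F_E, F_E]
  by_cases c1 : b ≤ k <;> by_cases c2 : a ≤ k
  · norm_num [c1, c2]
  · norm_num [c1, c2]
  · exact absurd (le_of_lt (lt_of_lt_of_le hba c2)) c1
  · simp [c1, c2]

lemma C_sum {a b : Fin n} (hba : b < a) (i j : Fin n) :
    (¬(F i (RR n (a, b)) = 0 ∧ F j (RR n (a, b)) = 0)) ↔ (b ≤ i ∨ b ≤ j) := by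
  have hr : RR n (a, b) = E n b + E n a := by simp [RR, hba, not_lt_of_gt hba]
  rw [hr, F_sum_zero_iff hba, F_sum_zero_iff hba]
  tauto


open scoped Classical

lemma count_z01 (hn : 2 ≤ n) :
    (Out n (⟨0, by omega⟩ : Fin n) (⟨1, by omega⟩ : Fin n)).ncard = 4 * n - 4 := by
  set z0 : Fin n := ⟨0, by omega⟩ with hz0
  set z1 : Fin n := ⟨1, by omega⟩ with hz1
  have hne : z0 ≠ z1 := by simp [hz0, hz1, Fin.ext_iff]
  rw [Out_ncard hne]
  have hcond : ∀ p : Fin n × Fin n,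
      (¬(F z0 (RR n p) = 0 ∧ F z1 (RR n p) = 0)) ↔ ((p.1 : ℕ) ≤ 1 ∨ (p.2 : ℕ) ≤ 1) := by
    rintro ⟨a, b⟩
    rcases lt_trichotomy a b with h | h | h
    · rw [C_diff h]
      rw [Fin.lt_def] at h
      simp only [Fin.le_def, Fin.lt_def, hz0, hz1]
      omega
    · subst h
      rw [C_single]
      simp only [Fin.le_def, hz0, hz1]
      omega
    · rw [C_sum h]
      rw [Fin.lt_def] at h
      simp only [Fin.le_def, hz0, hz1]
      omega
  rw [Finset.filter_congr (fun p _ => by rw [hcond p])]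
  have hsplit :
      (Finset.univ.filter (fun p : Fin n × Fin n => (p.1 : ℕ) ≤ 1 ∨ (p.2 : ℕ) ≤ 1)).card +
      (Finset.univ.filter (fun p : Fin n × Fin n => ¬((p.1 : ℕ) ≤ 1 ∨ (p.2 : ℕ) ≤ 1))).card =
      n * n := by
    rw [Finset.card_filter_add_card_filter_not]
    simp
  have hneg :
      (Finset.univ.filter (fun p : Fin n × Fin n => ¬((p.1 : ℕ) ≤ 1 ∨ (p.2 : ℕ) ≤ 1))) =
      Finset.Ioi z1 ×ˢ Finset.Ioi z1 := by
    ext ⟨a, b⟩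
    simp only [Finset.mem_filter, Finset.mem_univ, true_and, Finset.mem_product,
      Finset.mem_Ioi, Fin.lt_def, hz1]
    omega
  rw [hneg, Finset.card_product, Fin.card_Ioi] at hsplit
  simp only [hz1] at hsplit
  obtain ⟨m, rfl⟩ : ∃ m, n = m + 2 := ⟨n - 2, by omega⟩
  have hring : (m + 2) * (m + 2) = m * m + (4 * m + 4) := by ring
  have hsub : m + 2 - 1 - 1 = m := by omega
  rw [hsub] at hsplit
  have hgoal : 4 * (m + 2) - 4 = 4 * m + 4 := by omega
  rw [hgoal]
  linarith [hsplit, hring]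


lemma lower_bound (hn : 2 ≤ n) {i j : Fin n} (hij : i < j) :
    4 * n - 4 ≤ (Out n i j).ncard := by
  set z0 : Fin n := ⟨0, by omega⟩ with hz0
  set z1 : Fin n := ⟨1, by omega⟩ with hz1
  rw [Out_ncard (ne_of_lt hij)]
  set T := Finset.univ.filter (fun p : Fin n × Fin n =>
    ¬(F i (RR n p) = 0 ∧ F j (RR n p) = 0)) with hT
  set S1 := (Finset.Iic j).image (fun a => (a, a)) with hS1
  set S2 := (Finset.Ioi z0 ×ˢ ({z0} : Finset (Fin n))) ∪
            (Finset.Ioi z1 ×ˢ ({z1} : Finset (Fin n))) with hS2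
  set R1 := Finset.Iic i ×ˢ Finset.Ioi i with hR1
  set R2 := Finset.Ioc i j ×ˢ Finset.Ioi j with hR2
  have hj1 : 1 ≤ (j : ℕ) := by
    have := hij
    rw [Fin.lt_def] at this
    omega
  -- membership
  have hsub : S1 ∪ S2 ∪ R1 ∪ R2 ⊆ T := by
    intro p hp
    simp only [hT, Finset.mem_filter, Finset.mem_univ, true_and]
    simp only [Finset.mem_union] at hp
    rcases hp with ((h1 | h2) | h3) | h4
    · simp only [hS1, Finset.mem_image, Finset.mem_Iic] at h1
      obtain ⟨a, ha, rfl⟩ := h1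
      rw [C_single]
      exact Or.inr ha
    · simp only [hS2, Finset.mem_union, Finset.mem_product, Finset.mem_Ioi,
        Finset.mem_singleton] at h2
      obtain ⟨a, b⟩ := p
      rcases h2 with ⟨hlt, rfl⟩ | ⟨hlt, rfl⟩
      · rw [C_sum hlt]
        exact Or.inr (by rw [Fin.le_def]; exact Nat.zero_le _)
      · rw [C_sum hlt]
        exact Or.inr (by rw [Fin.le_def]; exact hj1)
    · simp only [hR1, Finset.mem_product, Finset.mem_Iic, Finset.mem_Ioi] at h3
      obtain ⟨a, b⟩ := p
      obtain ⟨ha, hb⟩ := h3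
      rw [C_diff (lt_of_le_of_lt ha hb)]
      exact Or.inl ⟨ha, hb⟩
    · simp only [hR2, Finset.mem_product, Finset.mem_Ioc, Finset.mem_Ioi] at h4
      obtain ⟨a, b⟩ := p
      obtain ⟨⟨hia, ha⟩, hb⟩ := h4
      rw [C_diff (lt_of_le_of_lt ha hb)]
      exact Or.inr ⟨ha, hb⟩
  have hcard := Finset.card_le_card hsub
  -- memberships in pieces, as val facts
  have memS1 : ∀ a b : Fin n, (a, b) ∈ S1 → a = b := by
    intro a b h
    simp only [hS1, Finset.mem_image, Finset.mem_Iic, Prod.mk.injEq] at h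
    obtain ⟨x, _, rfl, rfl⟩ := h
    rfl
  have memS2 : ∀ a b : Fin n, (a, b) ∈ S2 → b < a := by
    intro a b h
    simp only [hS2, Finset.mem_union, Finset.mem_product, Finset.mem_Ioi,
      Finset.mem_singleton] at h
    rcases h with ⟨hlt, rfl⟩ | ⟨hlt, rfl⟩ <;> exact hlt
  have memR1 : ∀ a b : Fin n, (a, b) ∈ R1 → a ≤ i ∧ i < b := by
    intro a b h
    simpa only [hR1, Finset.mem_product, Finset.mem_Iic, Finset.mem_Ioi] using h
  have memR2 : ∀ a b : Fin n, (a, b) ∈ R2 → (i < a ∧ a ≤ j) ∧ j < b := by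
    intro a b h
    simpa only [hR2, Finset.mem_product, Finset.mem_Ioc, Finset.mem_Ioi] using h
  have d_a : Disjoint S1 S2 := by
    rw [Finset.disjoint_left]
    rintro ⟨a, b⟩ h1 h2
    have he := memS1 a b h1
    have hl := memS2 a b h2
    rw [he] at hl
    exact lt_irrefl _ hl
  have d_b : Disjoint (S1 ∪ S2) R1 := by
    rw [Finset.disjoint_left]
    rintro ⟨a, b⟩ h1 h2
    obtain ⟨ha, hb⟩ := memR1 a b h2
    have hab : a < b := lt_of_le_of_lt ha hb
    rcases Finset.mem_union.mp h1 with h1 | h1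
    · exact absurd (memS1 a b h1) (ne_of_lt hab)
    · exact lt_asymm hab (memS2 a b h1)
  have d_c : Disjoint (S1 ∪ S2 ∪ R1) R2 := by
    rw [Finset.disjoint_left]
    rintro ⟨a, b⟩ h1 h2
    obtain ⟨⟨hia, ha⟩, hb⟩ := memR2 a b h2
    have hab : a < b := lt_of_le_of_lt ha hb
    rcases Finset.mem_union.mp h1 with h1 | h1
    · rcases Finset.mem_union.mp h1 with h1 | h1
      · exact absurd (memS1 a b h1) (ne_of_lt hab)
      · exact lt_asymm hab (memS2 a b h1)
    · exact absurd (memR1 a b h1).1 (not_le.mpr hia)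
  have hcup : (S1 ∪ S2 ∪ R1 ∪ R2).card = S1.card + S2.card + R1.card + R2.card := by
    rw [Finset.card_union_of_disjoint d_c, Finset.card_union_of_disjoint d_b,
      Finset.card_union_of_disjoint d_a]
  -- individual cards
  have hz0v : ((z0 : Fin n) : ℕ) = 0 := rfl
  have hz1v : ((z1 : Fin n) : ℕ) = 1 := rfl
  have cS1 : S1.card = (j : ℕ) + 1 := by
    rw [hS1, Finset.card_image_of_injective _ (fun x y h => congrArg Prod.fst h),
      Fin.card_Iic]
  have d0 : Disjoint (Finset.Ioi z0 ×ˢ ({z0} : Finset (Fin n)))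
      (Finset.Ioi z1 ×ˢ ({z1} : Finset (Fin n))) := by
    rw [Finset.disjoint_left]
    rintro ⟨a, b⟩ h1 h2
    simp only [Finset.mem_product, Finset.mem_singleton] at h1 h2
    have : z0 = z1 := h1.2 ▸ h2.2
    simp [Fin.ext_iff, hz0, hz1] at this
  have cS2 : S2.card = (n - 1) + (n - 1 - 1) := by
    rw [hS2, Finset.card_union_of_disjoint d0, Finset.card_product, Finset.card_product,
      Fin.card_Ioi, Fin.card_Ioi, Finset.card_singleton, Finset.card_singleton,
      hz0v, hz1v]
    omega
  have cR1 : R1.card = ((i : ℕ) + 1) * (n - 1 - (i : ℕ)) := by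
    rw [hR1, Finset.card_product, Fin.card_Iic, Fin.card_Ioi]
  have cR2 : R2.card = ((j : ℕ) - (i : ℕ)) * (n - 1 - (j : ℕ)) := by
    rw [hR2, Finset.card_product, Fin.card_Ioc, Fin.card_Ioi]
  -- final arithmetic
  have hIJ : (i : ℕ) < (j : ℕ) := hij
  have hJn : (j : ℕ) < n := j.isLt
  have hc1 : (i : ℕ) + (n - 1 - (i : ℕ)) = n - 1 := by omega
  have hc2 : (j : ℕ) + (n - 1 - (j : ℕ)) = n - 1 := by omega
  have h1 : n - 1 ≤ ((i : ℕ) + 1) * (n - 1 - (i : ℕ)) := by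
    have hpos : 1 ≤ n - 1 - (i : ℕ) := by omega
    have hmul : (i : ℕ) * 1 ≤ (i : ℕ) * (n - 1 - (i : ℕ)) :=
      Nat.mul_le_mul_left _ hpos
    have hexp : ((i : ℕ) + 1) * (n - 1 - (i : ℕ)) =
        (i : ℕ) * (n - 1 - (i : ℕ)) + (n - 1 - (i : ℕ)) := by ring
    rw [hexp]
    rw [Nat.mul_one] at hmul
    omega
  have h2 : n - 1 - (j : ℕ) ≤ ((j : ℕ) - (i : ℕ)) * (n - 1 - (j : ℕ)) :=
    Nat.le_mul_of_pos_left _ (by omega)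
  rw [hcup, cS1, cS2, cR1, cR2] at hcard
  omega


lemma lower_bound' (hn : 2 ≤ n) {i j : Fin n} (hij : i ≠ j) :
    4 * n - 4 ≤ (Out n i j).ncard := by
  rcases lt_or_gt_of_ne hij with h | h
  · exact lower_bound hn h
  · rw [Out_comm]
    exact lower_bound hn h

end Stmt5Aux

/-- In the root system of type `B_n` (`n ≥ 2`), the minimum over unordered pairs of distinct
simple roots `{α_i, α_j}` of the resonant codimension of `Π \ {α_i, α_j}` equals `4n - 4`. -/
theorem stmt5 (n : ℕ) (hn : 2 ≤ n) :
    let e : Fin n → (Fin n → ℝ) := fun i => Pi.single i 1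
    let Sp : Set (Fin n → ℝ) :=
      {v | (∃ i j : Fin n, i < j ∧ (v = e i - e j ∨ v = e i + e j)) ∨ ∃ i : Fin n, v = e i}
    let α : Fin n → (Fin n → ℝ) := fun k =>
      if h : (k : ℕ) + 1 < n then e k - e ⟨(k : ℕ) + 1, h⟩ else e k
    let rc : Set (Fin n → ℝ) → ℕ := fun Pi' =>
      Set.ncard {v | v ∈ Sp ∧ v ∉ Submodule.span ℝ Pi'}
    (⨅ p : {p : Fin n × Fin n // p.1 ≠ p.2},
      rc (Set.range α \ {α p.val.1, α p.val.2})) = 4 * n - 4 := by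
  intro e Sp α rc
  have he : e = Stmt5Aux.E n := rfl
  have hα : α = Stmt5Aux.A n := by
    funext k
    simp only [Stmt5Aux.A, Stmt5Aux.E, he, α, e]
  have hSp : Sp = Stmt5Aux.Sp n := rfl
  have hrc : ∀ i j : Fin n, rc (Set.range α \ {α i, α j}) = (Stmt5Aux.Out n i j).ncard := by
    intro i j
    rw [hα]
    rfl
  set z0 : Fin n := ⟨0, by omega⟩ with hz0
  set z1 : Fin n := ⟨1, by omega⟩ with hz1
  have hne01 : z0 ≠ z1 := by simp [hz0, hz1, Fin.ext_iff]
  haveI : Nonempty {p : Fin n × Fin n // p.1 ≠ p.2} := ⟨⟨(z0, z1), hne01⟩⟩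
  apply le_antisymm
  · have h := ciInf_le
      (f := fun p : {p : Fin n × Fin n // p.1 ≠ p.2} =>
        rc (Set.range α \ {α p.val.1, α p.val.2}))
      (OrderBot.bddBelow _) (⟨(z0, z1), hne01⟩ : {p : Fin n × Fin n // p.1 ≠ p.2})
    refine h.trans_eq ?_
    rw [hrc z0 z1]
    exact Stmt5Aux.count_z01 hn
  · apply le_ciInf
    rintro ⟨⟨i, j⟩, hij⟩
    rw [hrc i j]
    exact Stmt5Aux.lower_bound' hn hij
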